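/- (Neumann-type lemma, strengthened) Let G ≤ Sym(ℕ) be a group acting on ℕ, and partition ℕ = A ⊔ B where B is the set of points with infinite G-orbit and A the set of points with finite G-orbit. Then there exists a sequence (g_n) in G such that: (1) for every finite F ⊆ B, F ∩ g_n[F] = ∅ for all but finitely many n; and (2) for every a ∈ A, g_n(a) = a for all but finitely many n. -/

import Mathlib

open MulAction Pointwise

theorem my_neumann {M α : Type*} [Group M] [MulAction M α] (F : Finset α)
    (hF : ∀ b ∈ F, (MulAction.orbit M b).Infinite) :
    ∃ g : M, ∀ a ∈ F, g • a ∉ F := by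
  classical
  by_contra h
  push_neg at h
  set s : Finset (α × α) := (F ×ˢ F).filter (fun p => ∃ g : M, g • p.1 = p.2) with hs
  have hgp : ∀ p : {p // p ∈ s}, ∃ g : M, g • (p : α × α).1 = (p : α × α).2 := by
    intro p
    exact (Finset.mem_filter.mp p.2).2
  choose gp hgp using hgp
  have hcovers : ⋃ p ∈ (Finset.univ : Finset {p // p ∈ s}),
      gp p • ((MulAction.stabilizer M (p : α × α).1 : Subgroup M) : Set M) = Set.univ := by
    ext x
    simp only [Set.mem_iUnion, Set.mem_univ, iff_true, Finset.mem_univ, exists_true_left]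
    obtain ⟨a, haF, hxa⟩ := h x
    have hps : (a, x • a) ∈ s := by
      rw [hs, Finset.mem_filter]
      exact ⟨Finset.mem_product.mpr ⟨haF, hxa⟩, x, rfl⟩
    refine ⟨⟨(a, x • a), hps⟩, ?_⟩
    rw [mem_leftCoset_iff, SetLike.mem_coe, MulAction.mem_stabilizer_iff, mul_smul,
      inv_smul_eq_iff]
    exact (hgp ⟨(a, x • a), hps⟩).symm
  obtain ⟨k, -, hk⟩ := Subgroup.exists_finiteIndex_of_leftCoset_cover hcovers
  have hkF : (k : α × α).1 ∈ F := (Finset.mem_product.mp (Finset.mem_filter.mp k.2).1).1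
  have : (MulAction.orbit M (k : α × α).1).ncard = 0 := (hF _ hkF).ncard
  rw [← MulAction.index_stabilizer] at this
  exact hk.index_ne_zero this

theorem my_neumann_strong {M α : Type*} [Group M] [MulAction M α] (F D : Finset α)
    (hF : ∀ b ∈ F, (MulAction.orbit M b).Infinite)
    (hD : ∀ a ∈ D, (MulAction.orbit M a).Finite) :
    ∃ g : M, (∀ a ∈ F, g • a ∉ F) ∧ ∀ a ∈ D, g • a = a := by
  classical
  set H : Subgroup M := ⨅ a ∈ D, MulAction.stabilizer M a with hH
  have hHfi : H.FiniteIndex := by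
    apply Subgroup.finiteIndex_iInf'
    intro a ha
    constructor
    rw [MulAction.index_stabilizer]
    exact Set.ncard_ne_zero_of_mem (MulAction.mem_orbit_self a) (hD a ha)
  have hFH : ∀ b ∈ F, (MulAction.orbit H b).Infinite := by
    intro b hb
    intro hfin
    -- stabilizer of b in H has finite index in H
    have h1 : (MulAction.stabilizer H b).index ≠ 0 := by
      rw [MulAction.index_stabilizer]
      exact Set.ncard_ne_zero_of_mem (MulAction.mem_orbit_self b) hfin
    have heq : MulAction.stabilizer H b = (MulAction.stabilizer M b).subgroupOf H := by
      ext g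
      simp [MulAction.mem_stabilizer_iff, Subgroup.mem_subgroupOf, Subgroup.smul_def]
    have h2 : (MulAction.stabilizer M b).relIndex H ≠ 0 := by
      rw [Subgroup.relIndex, ← heq]; exact h1
    have h3 : ((MulAction.stabilizer M b) ⊓ H).index ≠ 0 := by
      rw [← Subgroup.relIndex_mul_index (inf_le_right :
        (MulAction.stabilizer M b) ⊓ H ≤ H), Subgroup.inf_relIndex_right]
      exact mul_ne_zero h2 hHfi.index_ne_zero
    have h4 : (MulAction.stabilizer M b).index ≠ 0 := by
      intro h0
      exact h3 (Nat.eq_zero_of_zero_dvd (h0 ▸ Subgroup.index_dvd_of_le inf_le_left) )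
    rw [MulAction.index_stabilizer, (hF b hb).ncard] at h4
    exact h4 rfl
  obtain ⟨g, hg⟩ := my_neumann (M := H) F hFH
  refine ⟨(g : M), fun a ha => hg a ha, fun a ha => ?_⟩
  have hm := g.2
  simp only [hH, Subgroup.mem_iInf] at hm
  exact hm a ha

/-- strengthened Neumann lemma: Let `G ≤ Sym(ℕ)` and partition
`ℕ = A ⊔ B`, `B` the points with infinite `G`-orbit and `A` those with finite orbit.
There is a sequence `(gₙ)` in `G` with: (1) for every finite `F ⊆ B`,
`F ∩ gₙ[F] = ∅` for all but finitely many `n`; (2) for every `a ∈ A`, `gₙ a = a` for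
all but finitely many `n`. -/
theorem stmt13 (G : Subgroup (Equiv.Perm ℕ)) :
    ∃ g : ℕ → G,
      (∀ F : Finset ℕ, (∀ b ∈ F, (MulAction.orbit G b).Infinite) →
        ∀ᶠ n in Filter.atTop, ∀ a ∈ F, (g n : Equiv.Perm ℕ) a ∉ F) ∧
      (∀ a : ℕ, (MulAction.orbit G a).Finite →
        ∀ᶠ n in Filter.atTop, (g n : Equiv.Perm ℕ) a = a) := by
  classical
  set Fn : ℕ → Finset ℕ :=
    fun n => (Finset.range (n+1)).filter (fun b => (MulAction.orbit G b).Infinite) with hFn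
  set Dn : ℕ → Finset ℕ :=
    fun n => (Finset.range (n+1)).filter (fun b => (MulAction.orbit G b).Finite) with hDn
  have hex : ∀ n : ℕ, ∃ g : G, (∀ a ∈ Fn n, g • a ∉ Fn n) ∧ ∀ a ∈ Dn n, g • a = a := by
    intro n
    apply my_neumann_strong
    · intro b hb; exact (Finset.mem_filter.mp hb).2
    · intro a ha; exact (Finset.mem_filter.mp ha).2
  choose g hg1 hg2 using hex
  have hsmul : ∀ (n : ℕ) (a : ℕ), (g n : Equiv.Perm ℕ) a = g n • a := fun n a => rfl
  refine ⟨g, ?_, ?_⟩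
  · intro F hF
    rw [Filter.eventually_atTop]
    refine ⟨F.sup id, fun n hn a ha hcon => ?_⟩
    have haFn : a ∈ Fn n := by
      rw [hFn, Finset.mem_filter, Finset.mem_range]
      exact ⟨Nat.lt_succ_of_le (le_trans (Finset.le_sup (f := id) ha) hn), hF a ha⟩
    apply hg1 n a haFn
    rw [hFn, Finset.mem_filter, Finset.mem_range]
    refine ⟨Nat.lt_succ_of_le (le_trans (Finset.le_sup (f := id) hcon) hn), hF _ hcon⟩
  · intro a hafin
    rw [Filter.eventually_atTop]
    refine ⟨a, fun n hn => ?_⟩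
    apply hg2 n a
    rw [hDn, Finset.mem_filter, Finset.mem_range]
    exact ⟨Nat.lt_succ_of_le hn, hafin⟩
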